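/- Let E be a Hilbert space decomposed orthogonally as E = E⁺ ⊕ E⁰ ⊕ E⁻ with dim E⁰ < ∞, and let 𝒦 : E → ℝ be a strictly convex C¹ functional with 𝒦(0) = 0, 𝒦(ψ) > 0 and 𝒦'(ψ)[ψ] > 2𝒦(ψ) for all ψ ≠ 0. Suppose moreover 𝒦(ψ) ≥ C‖ψ‖^{2*} − ε‖ψ‖² on the subspace ℝφ ⊕ E⁰ ⊕ E⁻ for some 2* > 2, and 𝒦(ψ) = o(‖ψ‖²) as ψ → 0. Then for any unit vector φ ∈ E⁺, the functional L(ψ) = (1/2)(‖ψ⁺‖² − ‖ψ⁻‖²) − 𝒦(ψ) restricted to Ê(φ) := {tφ + χ : t ≥ 0, χ ∈ E⁰ ⊕ E⁻} attains a positive supremum, and L ≤ 0 on Ê(φ) outside a bounded set. -/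

import Mathlib

open Filter Asymptotics

theorem aux_min' {E : Type*} [NormedAddCommGroup E] [InnerProductSpace ℝ E] [CompleteSpace E]
    (f : E → ℝ) (hconv : ConvexOn ℝ Set.univ f) (hcont : Continuous f) (hnn : ∀ x, 0 ≤ f x)
    (N : Set E) (hNc : IsClosed N) (hNconv : Convex ℝ N) (hN0 : (0:E) ∈ N) :
    ∃ w ∈ N, ∀ w' ∈ N, ‖w‖^2/2 + f w ≤ ‖w'‖^2/2 + f w' := by
  set g : E → ℝ := fun w => ‖w‖^2/2 + f w with hg
  have hgnn : ∀ w, 0 ≤ g w := fun w => add_nonneg (by positivity) (hnn w)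
  have hS : (g '' N).Nonempty := ⟨g 0, 0, hN0, rfl⟩
  have hSbdd : BddBelow (g '' N) := ⟨0, by rintro s ⟨w, _, rfl⟩; exact hgnn w⟩
  set m := sInf (g '' N) with hm
  have hm_le : ∀ w ∈ N, m ≤ g w := fun w hw => csInf_le hSbdd ⟨w, hw, rfl⟩
  have hseq : ∀ n : ℕ, ∃ w ∈ N, g w < m + 1/(n+1) := by
    intro n
    have hlt : m < m + 1/(n+1) := lt_add_of_pos_right _ (by positivity)
    obtain ⟨s, ⟨w, hw, rfl⟩, hs⟩ := exists_lt_of_csInf_lt hS hlt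
    exact ⟨w, hw, hs⟩
  choose u hu hgu using hseq
  have key : ∀ x ∈ N, ∀ y ∈ N, ‖x - y‖^2 ≤ 4*(g x - m) + 4*(g y - m) := by
    intro x hx y hy
    have hmid : (1/2:ℝ) • x + (1/2:ℝ) • y ∈ N :=
      hNconv hx hy (by norm_num) (by norm_num) (by norm_num)
    have h1 : m ≤ g ((1/2:ℝ) • x + (1/2:ℝ) • y) := hm_le _ hmid
    have h2 : f ((1/2:ℝ) • x + (1/2:ℝ) • y) ≤ (1/2)*f x + (1/2)*f y := by
      have := hconv.2 (Set.mem_univ x) (Set.mem_univ y)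
        (by norm_num : (0:ℝ) ≤ 1/2) (by norm_num : (0:ℝ) ≤ 1/2) (by norm_num)
      simpa [smul_eq_mul] using this
    have h3 := parallelogram_law_with_norm ℝ x y
    have h4 : ‖(1/2:ℝ) • x + (1/2:ℝ) • y‖ = ‖x + y‖/2 := by
      rw [← smul_add, norm_smul]
      simp [abs_of_nonneg]
      ring
    have h5 : g ((1/2:ℝ) • x + (1/2:ℝ) • y) = ‖x+y‖^2/8 + f ((1/2:ℝ) • x + (1/2:ℝ) • y) := by
      rw [hg]; simp only [h4]; ring
    have hgx : g x = ‖x‖^2/2 + f x := rfl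
    have hgy : g y = ‖y‖^2/2 + f y := rfl
    have e1 : ‖x+y‖^2 = ‖x+y‖*‖x+y‖ := pow_two _
    have e2 : ‖x-y‖^2 = ‖x-y‖*‖x-y‖ := pow_two _
    have e3 : ‖x‖^2 = ‖x‖*‖x‖ := pow_two _
    have e4 : ‖y‖^2 = ‖y‖*‖y‖ := pow_two _
    rw [hgx, hgy]
    linarith
  have hcauchy : CauchySeq u := by
    rw [Metric.cauchySeq_iff]
    intro ε hε
    obtain ⟨M, hM⟩ := exists_nat_gt (8/ε^2)
    refine ⟨M, fun n hn k hk => ?_⟩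
    have hMpos : (0:ℝ) < M + 1 := by positivity
    have h8 : 8/((M:ℝ)+1) < ε^2 := by
      rw [div_lt_iff₀ hMpos]
      have hε2 : (0:ℝ) < ε^2 := by positivity
      have h88 : (8:ℝ) = (8/ε^2) * ε^2 := by field_simp
      nlinarith
    have hb : ∀ j : ℕ, M ≤ j → g (u j) - m < 1/((M:ℝ)+1) := by
      intro j hj
      have := hgu j
      have hle : 1/((j:ℝ)+1) ≤ 1/((M:ℝ)+1) := by
        apply one_div_le_one_div_of_le hMpos
        exact_mod_cast by omega
      linarith
    have hkey := key (u n) (hu n) (u k) (hu k)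
    have hd : ‖u n - u k‖^2 < ε^2 := by
      have b1 := hb n hn
      have b2 := hb k hk
      calc ‖u n - u k‖^2 ≤ 4*(g (u n) - m) + 4*(g (u k) - m) := hkey
        _ < 8/((M:ℝ)+1) := by
            have : 4*(1/((M:ℝ)+1)) + 4*(1/((M:ℝ)+1)) = 8/((M:ℝ)+1) := by ring
            linarith
        _ < ε^2 := h8
    rw [dist_eq_norm]
    nlinarith [norm_nonneg (u n - u k)]
  obtain ⟨w, hwlim⟩ := cauchySeq_tendsto_of_complete hcauchy
  have hwN : w ∈ N := hNc.mem_of_tendsto hwlim (Filter.Eventually.of_forall hu)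
  have hgcont : Continuous g := ((continuous_norm.pow 2).div_const 2).add hcont
  have hgw : Filter.Tendsto (fun n => g (u n)) atTop (nhds (g w)) :=
    (hgcont.continuousAt.tendsto).comp hwlim
  have hmm : Filter.Tendsto (fun n : ℕ => m + 1/((n:ℝ)+1)) atTop (nhds m) := by
    have := tendsto_one_div_add_atTop_nhds_zero_nat (𝕜 := ℝ)
    simpa using tendsto_const_nhds.add this
  have hgwm : g w ≤ m := by
    refine le_of_tendsto_of_tendsto' hgw hmm fun n => (hgu n).le
  exact ⟨w, hwN, fun w' hw' => le_trans hgwm (hm_le w' hw')⟩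

theorem proj_eq_zero' {E : Type*} [NormedAddCommGroup E] [InnerProductSpace ℝ E]
    (q w A B : E) (hQ : q = w - A - B)
    (h1 : inner ℝ q w = (0:ℝ)) (h2 : inner ℝ q A = (0:ℝ)) (h3 : inner ℝ q B = (0:ℝ)) : q = 0 := by
  have h : (inner ℝ q q : ℝ) = 0 := by
    nth_rewrite 2 [hQ]
    rw [inner_sub_right, inner_sub_right, h1, h2, h3]; ring
  exact inner_self_eq_zero.mp h

set_option maxHeartbeats 2000000 in
theorem stmt11 (E : Type*) [NormedAddCommGroup E] [InnerProductSpace ℝ E] [CompleteSpace E]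
    (Pp P0 Pn : E →L[ℝ] E)
    (hsum : ∀ ψ : E, Pp ψ + P0 ψ + Pn ψ = ψ)
    (horth1 : ∀ ψ φ : E, inner ℝ (Pp ψ) (P0 φ) = (0:ℝ))
    (horth2 : ∀ ψ φ : E, inner ℝ (Pp ψ) (Pn φ) = (0:ℝ))
    (horth3 : ∀ ψ φ : E, inner ℝ (P0 ψ) (Pn φ) = (0:ℝ))
    (hfin : FiniteDimensional ℝ (LinearMap.range (P0 : E →ₗ[ℝ] E)))
    (K : E → ℝ) (DK : E → (E →L[ℝ] ℝ))
    (hderiv : ∀ ψ, HasFDerivAt K (DK ψ) ψ) (hDKcont : Continuous DK)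
    (hK0 : K 0 = 0)
    (hstrict : StrictConvexOn ℝ Set.univ K)
    (hpos : ∀ ψ : E, ψ ≠ 0 → 0 < K ψ)
    (hAR : ∀ ψ : E, ψ ≠ 0 → 2 * K ψ < DK ψ ψ)
    (twoStar C ε : ℝ) (h2 : 2 < twoStar) (hC : 0 < C) (hε : 0 < ε) (hε' : ε < 1/2)
    (φ : E) (hφ : φ ∈ LinearMap.range (Pp : E →ₗ[ℝ] E)) (hφn : ‖φ‖ = 1)
    (hcoer : ∀ ψ : E, (∃ t : ℝ, ∃ χ : E, Pp χ = 0 ∧ ψ = t • φ + χ) →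
        C * ‖ψ‖ ^ twoStar - ε * ‖ψ‖ ^ 2 ≤ K ψ)
    (hsmall : (fun ψ : E => K ψ) =o[nhds 0] fun ψ : E => ‖ψ‖ ^ 2)
    (L : E → ℝ)
    (hL : ∀ ψ, L ψ = (1/2) * (‖Pp ψ‖ ^ 2 - ‖Pn ψ‖ ^ 2) - K ψ) :
    (∃ ψs : E, (∃ t : ℝ, 0 ≤ t ∧ ∃ χ : E, Pp χ = 0 ∧ ψs = t • φ + χ) ∧ 0 < L ψs ∧
        ∀ ψ : E, (∃ t : ℝ, 0 ≤ t ∧ ∃ χ : E, Pp χ = 0 ∧ ψ = t • φ + χ) → L ψ ≤ L ψs) ∧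
    (∃ R : ℝ, ∀ ψ : E, (∃ t : ℝ, 0 ≤ t ∧ ∃ χ : E, Pp χ = 0 ∧ ψ = t • φ + χ) →
        R ≤ ‖ψ‖ → L ψ ≤ 0) := by
  classical
  have Kcont : Continuous K := continuous_iff_continuousAt.mpr fun ψ => (hderiv ψ).continuousAt
  have hconv : ConvexOn ℝ Set.univ K := hstrict.convexOn
  have Knn : ∀ ψ : E, 0 ≤ K ψ := by
    intro ψ; rcases eq_or_ne ψ 0 with h | h
    · simp [h, hK0]
    · exact (hpos ψ h).le
  -- rearrangement helpers
  have hQp : ∀ w : E, Pp w = w - P0 w - Pn w := by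
    intro w
    have h : Pp w + (P0 w + Pn w) = w := by rw [← add_assoc]; exact hsum w
    rw [eq_sub_of_add_eq h, sub_add_eq_sub_sub]
  have hQ0 : ∀ w : E, P0 w = w - Pp w - Pn w := by
    intro w
    have h : P0 w + (Pp w + Pn w) = w := by
      calc P0 w + (Pp w + Pn w) = Pp w + P0 w + Pn w := by abel
        _ = w := hsum w
    rw [eq_sub_of_add_eq h, sub_add_eq_sub_sub]
  have hQn : ∀ w : E, Pn w = w - Pp w - P0 w := by
    intro w
    have h : Pn w + (Pp w + P0 w) = w := by
      calc Pn w + (Pp w + P0 w) = Pp w + P0 w + Pn w := by abel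
        _ = w := hsum w
    rw [eq_sub_of_add_eq h, sub_add_eq_sub_sub]
  have horth1' : ∀ a b : E, inner ℝ (P0 a) (Pp b) = (0:ℝ) := fun a b => by
    rw [real_inner_comm]; exact horth1 b a
  have horth2' : ∀ a b : E, inner ℝ (Pn a) (Pp b) = (0:ℝ) := fun a b => by
    rw [real_inner_comm]; exact horth2 b a
  have horth3' : ∀ a b : E, inner ℝ (Pn a) (P0 b) = (0:ℝ) := fun a b => by
    rw [real_inner_comm]; exact horth3 b a
  have hPpP0 : ∀ x : E, Pp (P0 x) = 0 := fun x =>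
    proj_eq_zero' _ _ _ _ (hQp (P0 x)) (horth1 (P0 x) x) (horth1 (P0 x) (P0 x)) (horth2 (P0 x) (P0 x))
  have hPnP0 : ∀ x : E, Pn (P0 x) = 0 := fun x =>
    proj_eq_zero' _ _ _ _ (hQn (P0 x)) (horth3' (P0 x) x) (horth2' (P0 x) (P0 x)) (horth3' (P0 x) (P0 x))
  have hP0P0 : ∀ x : E, P0 (P0 x) = P0 x := by
    intro x
    have h := hsum (P0 x); rw [hPpP0 x, hPnP0 x] at h; simpa using h
  have hP0Pp : ∀ x : E, P0 (Pp x) = 0 := fun x =>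
    proj_eq_zero' _ _ _ _ (hQ0 (Pp x)) (horth1' (Pp x) x) (horth1' (Pp x) (Pp x)) (horth3 (Pp x) (Pp x))
  have hPnPp : ∀ x : E, Pn (Pp x) = 0 := fun x =>
    proj_eq_zero' _ _ _ _ (hQn (Pp x)) (horth2' (Pp x) x) (horth2' (Pp x) (Pp x)) (horth3' (Pp x) (Pp x))
  have hPpPp : ∀ x : E, Pp (Pp x) = Pp x := by
    intro x
    have h := hsum (Pp x); rw [hP0Pp x, hPnPp x] at h; simpa using h
  have hPpPn : ∀ x : E, Pp (Pn x) = 0 := fun x =>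
    proj_eq_zero' _ _ _ _ (hQp (Pn x)) (horth2 (Pn x) x) (horth1 (Pn x) (Pn x)) (horth2 (Pn x) (Pn x))
  have hP0Pn : ∀ x : E, P0 (Pn x) = 0 := fun x =>
    proj_eq_zero' _ _ _ _ (hQ0 (Pn x)) (horth3 (Pn x) x) (horth1' (Pn x) (Pn x)) (horth3 (Pn x) (Pn x))
  have hPnPn : ∀ x : E, Pn (Pn x) = Pn x := by
    intro x
    have h := hsum (Pn x); rw [hPpPn x, hP0Pn x] at h; simpa using h
  have normsq : ∀ ψ : E, ‖ψ‖^2 = ‖Pp ψ‖^2 + ‖P0 ψ‖^2 + ‖Pn ψ‖^2 := by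
    intro ψ
    conv_lhs => rw [← hsum ψ]
    rw [norm_add_sq_real, norm_add_sq_real, inner_add_left, horth1, horth2 ψ ψ, horth3 ψ ψ]
    ring
  -- facts about φ
  obtain ⟨x0, hx0⟩ := hφ
  have hx0' : Pp x0 = φ := hx0
  have hPpφ : Pp φ = φ := by rw [← hx0']; exact hPpPp x0
  have hP0φ : P0 φ = 0 := by rw [← hx0']; exact hP0Pp x0
  have hPnφ : Pn φ = 0 := by rw [← hx0']; exact hPnPp x0
  -- Part 2 : the radius
  set R₀ : ℝ := max 1 ((1/C) ^ (1/(twoStar - 2))) with hR₀def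
  have hR0 : (1:ℝ) ≤ R₀ := le_max_left _ _
  have hRbound : ∀ ψ : E, (∃ t : ℝ, ∃ χ : E, Pp χ = 0 ∧ ψ = t • φ + χ) → R₀ ≤ ‖ψ‖ → L ψ ≤ 0 := by
    intro ψ hmem hnorm
    have hK := hcoer ψ hmem
    have hr1 : (1:ℝ) ≤ ‖ψ‖ := le_trans hR0 hnorm
    have hrpos : (0:ℝ) < ‖ψ‖ := lt_of_lt_of_le one_pos hr1
    have hsplit : ‖ψ‖ ^ twoStar = ‖ψ‖^2 * ‖ψ‖ ^ (twoStar - 2) := by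
      have e : ‖ψ‖^(2:ℕ) = ‖ψ‖ ^ ((2:ℕ):ℝ) := (Real.rpow_natCast _ 2).symm
      rw [e, ← Real.rpow_add hrpos]
      norm_num
    have hfac : 1 ≤ C * ‖ψ‖ ^ (twoStar - 2) := by
      have h1 : ((1/C) ^ (1/(twoStar-2)) : ℝ) ≤ ‖ψ‖ := le_trans (le_max_right _ _) hnorm
      have hd : (0:ℝ) < twoStar - 2 := by linarith
      have hbase : (0:ℝ) ≤ (1/C) ^ (1/(twoStar-2)) := Real.rpow_nonneg (by positivity) _
      have hmono : ((1/C) ^ (1/(twoStar-2)) : ℝ)^(twoStar-2) ≤ ‖ψ‖^(twoStar-2) :=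
        Real.rpow_le_rpow hbase h1 hd.le
      have hcollapse : ((1/C) ^ (1/(twoStar-2)) : ℝ)^(twoStar-2) = 1/C := by
        rw [← Real.rpow_mul (by positivity)]
        rw [one_div_mul_cancel (by linarith : twoStar - 2 ≠ 0)]
        exact Real.rpow_one _
      rw [hcollapse] at hmono
      calc (1:ℝ) = C * (1/C) := by field_simp
        _ ≤ C * ‖ψ‖^(twoStar-2) := by
            exact mul_le_mul_of_nonneg_left hmono hC.le
    have hC2 : ‖ψ‖^2 ≤ C * ‖ψ‖^twoStar := by
      calc ‖ψ‖^2 = ‖ψ‖^2 * 1 := by ring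
        _ ≤ ‖ψ‖^2 * (C * ‖ψ‖^(twoStar-2)) := by
            exact mul_le_mul_of_nonneg_left hfac (by positivity)
        _ = C * ‖ψ‖^twoStar := by rw [hsplit]; ring
    have hup : L ψ ≤ ‖ψ‖^2/2 - K ψ := by
      rw [hL]
      have h1 : ‖Pp ψ‖^2 ≤ ‖ψ‖^2 := by
        nlinarith [normsq ψ, sq_nonneg ‖P0 ψ‖, sq_nonneg ‖Pn ψ‖]
      nlinarith [sq_nonneg ‖Pn ψ‖]
    have hεle : ε * ‖ψ‖^2 ≤ (1/2) * ‖ψ‖^2 :=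
      mul_le_mul_of_nonneg_right hε'.le (by positivity)
    linarith
  -- small t₀ with L (t₀ • φ) > 0
  have hsm := hsmall.def (by norm_num : (0:ℝ) < 1/4)
  obtain ⟨δ, hδpos, hδ⟩ := Metric.eventually_nhds_iff.mp hsm
  set t₀ : ℝ := min (δ/2) 1 with ht₀def
  have ht₀pos : 0 < t₀ := lt_min (by linarith) one_pos
  have ht₀le1 : t₀ ≤ 1 := min_le_right _ _
  have ht₀δ : t₀ < δ := lt_of_le_of_lt (min_le_left _ _) (by linarith)
  have hnt₀ : ‖t₀ • φ‖ = t₀ := by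
    rw [norm_smul, hφn, mul_one, Real.norm_eq_abs, abs_of_pos ht₀pos]
  have hKt₀ : K (t₀ • φ) ≤ t₀^2/4 := by
    have hdist : dist (t₀ • φ) 0 < δ := by
      rw [dist_zero_right, hnt₀]; exact ht₀δ
    have := hδ hdist
    rw [Real.norm_eq_abs, Real.norm_eq_abs, hnt₀] at this
    have h1 : K (t₀ • φ) ≤ |K (t₀ • φ)| := le_abs_self _
    have h2 : |t₀^2| = t₀^2 := abs_of_nonneg (by positivity)
    rw [h2] at this
    linarith
  -- the finite-dimensional parameter space
  set V : Submodule ℝ E := LinearMap.range (P0 : E →ₗ[ℝ] E) with hVdef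
  haveI : FiniteDimensional ℝ V := hfin
  have hPpV : ∀ v : V, Pp (v : E) = 0 := by
    rintro ⟨v, a, rfl⟩; exact hPpP0 a
  have hP0V : ∀ v : V, P0 (v : E) = v := by
    rintro ⟨v, a, rfl⟩; exact hP0P0 a
  have hPnV : ∀ v : V, Pn (v : E) = 0 := by
    rintro ⟨v, a, rfl⟩; exact hPnP0 a
  set N : Set E := {w | Pn w = w} with hNdef
  have hNclosed : IsClosed N := isClosed_eq Pn.continuous continuous_id
  have hNconvex : Convex ℝ N := by
    intro x hx y hy a b ha hb hab
    simp only [hNdef, Set.mem_setOf_eq, map_add, map_smul] at *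
    rw [hx, hy]
  have hN0 : (0:E) ∈ N := by simp [hNdef]
  -- the partial minimization
  have hminex : ∀ c : E, ∃ w ∈ N, ∀ w' ∈ N, ‖w‖^2/2 + K (c + w) ≤ ‖w'‖^2/2 + K (c + w') := by
    intro c
    have hcv : ConvexOn ℝ Set.univ (fun w => K (c + w)) := by
      have := hconv.translate_right c
      exact this
    exact aux_min' _ hcv (Kcont.comp (continuous_const.add continuous_id))
      (fun w => Knn _) N hNclosed hNconvex hN0
  choose wm hwmN hwmin using hminex
  set cE : ℝ × V → E := fun p => p.1 • φ + (p.2 : E) with hcEdef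
  set h : ℝ × V → ℝ := fun p => ‖wm (cE p)‖^2/2 + K (cE p + wm (cE p)) with hhdef
  have hlin : ∀ (a b : ℝ) (p q : ℝ × V), cE (a • p + b • q) = a • cE p + b • cE q := by
    intro a b p q
    simp only [hcEdef, Prod.fst_add, Prod.snd_add, Prod.smul_fst, Prod.smul_snd,
      Submodule.coe_add, SetLike.val_smul, smul_eq_mul]
    module
  have hhub : ∀ (p : ℝ × V) (w : E), w ∈ N → h p ≤ ‖w‖^2/2 + K (cE p + w) :=
    fun p w hw => hwmin (cE p) w hw
  have hhconv : ConvexOn ℝ Set.univ h := by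
    refine ⟨convex_univ, ?_⟩
    intro p _ q _ a b ha hb hab
    have hwmem : a • wm (cE p) + b • wm (cE q) ∈ N :=
      hNconvex (hwmN (cE p)) (hwmN (cE q)) ha hb hab
    have hle := hhub (a • p + b • q) _ hwmem
    have hcc : cE (a • p + b • q) + (a • wm (cE p) + b • wm (cE q))
        = a • (cE p + wm (cE p)) + b • (cE q + wm (cE q)) := by
      rw [hlin]; module
    have hKle : K (a • (cE p + wm (cE p)) + b • (cE q + wm (cE q)))
        ≤ a * K (cE p + wm (cE p)) + b * K (cE q + wm (cE q)) := by
      have := hconv.2 (Set.mem_univ (cE p + wm (cE p))) (Set.mem_univ (cE q + wm (cE q))) ha hb hab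
      simpa [smul_eq_mul] using this
    have hnle : ‖a • wm (cE p) + b • wm (cE q)‖^2 ≤ a * ‖wm (cE p)‖^2 + b * ‖wm (cE q)‖^2 := by
      have h1 : ‖a • wm (cE p) + b • wm (cE q)‖ ≤ a * ‖wm (cE p)‖ + b * ‖wm (cE q)‖ := by
        calc ‖a • wm (cE p) + b • wm (cE q)‖ ≤ ‖a • wm (cE p)‖ + ‖b • wm (cE q)‖ := norm_add_le _ _
          _ = a * ‖wm (cE p)‖ + b * ‖wm (cE q)‖ := by
              rw [norm_smul, norm_smul, Real.norm_eq_abs, Real.norm_eq_abs,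
                abs_of_nonneg ha, abs_of_nonneg hb]
      nlinarith [norm_nonneg (a • wm (cE p) + b • wm (cE q)), norm_nonneg (wm (cE p)),
        norm_nonneg (wm (cE q)), sq_nonneg (‖wm (cE p)‖ - ‖wm (cE q)‖), mul_nonneg ha hb]
    have hhp : h p = ‖wm (cE p)‖^2/2 + K (cE p + wm (cE p)) := rfl
    have hhq : h q = ‖wm (cE q)‖^2/2 + K (cE q + wm (cE q)) := rfl
    rw [hcc] at hle
    rw [smul_eq_mul, smul_eq_mul]
    calc h (a • p + b • q) ≤ ‖a • wm (cE p) + b • wm (cE q)‖^2/2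
          + K (a • (cE p + wm (cE p)) + b • (cE q + wm (cE q))) := hle
      _ ≤ a * h p + b * h q := by rw [hhp, hhq]; nlinarith [hKle, hnle]
  have hhcont : Continuous h := by
    have := hhconv.continuousOn isOpen_univ
    rw [← continuousOn_univ]
    exact this
  set M : ℝ × V → ℝ := fun p => p.1^2/2 - h p with hMdef
  have hMcont : Continuous M := ((continuous_fst.pow 2).div_const 2).sub hhcont
  -- the compact region
  set Kc : Set (ℝ × V) := {p | 0 ≤ p.1 ∧ ‖p‖ ≤ R₀} with hKcdef
  have hKcclosed : IsClosed Kc := by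
    have : Kc = {p : ℝ × V | 0 ≤ p.1} ∩ {p : ℝ × V | ‖p‖ ≤ R₀} := rfl
    rw [this]
    exact (isClosed_le continuous_const continuous_fst).inter
      (isClosed_le continuous_norm continuous_const)
  have hKccompact : IsCompact Kc := by
    apply Metric.isCompact_of_isClosed_isBounded hKcclosed
    apply Bornology.IsBounded.subset (Metric.isBounded_closedBall (x := (0 : ℝ × V)) (r := R₀))
    intro p hp
    rw [Metric.mem_closedBall, dist_zero_right]
    exact hp.2
  have ht₀mem : ((t₀, (0:V)) : ℝ × V) ∈ Kc := by
    constructor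
    · exact ht₀pos.le
    · rw [Prod.norm_def]
      simp only [norm_zero]
      rw [Real.norm_eq_abs, abs_of_pos ht₀pos]
      exact max_le (le_trans ht₀le1 hR0) (le_trans zero_le_one hR0)
  obtain ⟨pstar, hpmem, hpmax⟩ := hKccompact.exists_isMaxOn ⟨_, ht₀mem⟩ hMcont.continuousOn
  have hpmax' : ∀ p ∈ Kc, M p ≤ M pstar := hpmax
  -- evaluation of L on cone elements
  have coneval : ∀ (t : ℝ) (v : V) (w : E), w ∈ N →
      L (t • φ + (v:E) + w) = t^2/2 - ‖w‖^2/2 - K (t • φ + (v:E) + w) := by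
    intro t v w hw
    have hwn : Pn w = w := hw
    have hPppsi : Pp (t • φ + (v:E) + w) = t • φ := by
      rw [map_add, map_add, map_smul, hPpφ, hPpV v]
      rw [← hwn, hPpPn]
      simp
    have hPnpsi : Pn (t • φ + (v:E) + w) = w := by
      rw [map_add, map_add, map_smul, hPnφ, hPnV v]
      rw [← hwn, hPnPn, hwn]
      simp
    rw [hL, hPppsi, hPnpsi, norm_smul, hφn, mul_one, Real.norm_eq_abs, sq_abs]
    ring
  have normeval : ∀ (t : ℝ) (v : V) (w : E), w ∈ N →
      ‖t • φ + (v:E) + w‖^2 = t^2 + ‖(v:E)‖^2 + ‖w‖^2 := by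
    intro t v w hw
    have hwn : Pn w = w := hw
    have hPppsi : Pp (t • φ + (v:E) + w) = t • φ := by
      rw [map_add, map_add, map_smul, hPpφ, hPpV v, ← hwn, hPpPn]; simp
    have hPnpsi : Pn (t • φ + (v:E) + w) = w := by
      rw [map_add, map_add, map_smul, hPnφ, hPnV v, ← hwn, hPnPn, hwn]; simp
    have hP0psi : P0 (t • φ + (v:E) + w) = (v:E) := by
      rw [map_add, map_add, map_smul, hP0φ, hP0V v, ← hwn, hP0Pn]; simp
    rw [normsq, hPppsi, hPnpsi, hP0psi, norm_smul, hφn, mul_one, Real.norm_eq_abs, sq_abs]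
  -- the maximizer
  set ψs : E := cE pstar + wm (cE pstar) with hψsdef
  have hψs_decomp : ψs = pstar.1 • φ + ((pstar.2 : E) + wm (cE pstar)) := by
    rw [hψsdef, hcEdef, add_assoc]
  have hψs_eq : ψs = pstar.1 • φ + (pstar.2 : E) + wm (cE pstar) := by
    rw [hψsdef, hcEdef]
  have hLψs : L ψs = M pstar := by
    rw [hψs_eq, coneval pstar.1 pstar.2 _ (hwmN (cE pstar))]
    have : pstar.1 • φ + (pstar.2:E) + wm (cE pstar) = cE pstar + wm (cE pstar) := by
      rw [hcEdef, add_assoc]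
    rw [this, hMdef, hhdef]
    ring
  -- positivity
  have hMt₀ : t₀^2/4 ≤ M (t₀, (0:V)) := by
    have hub := hhub (t₀, (0:V)) 0 hN0
    have hcE0 : cE (t₀, (0:V)) = t₀ • φ := by
      simp [hcEdef]
    rw [hcE0] at hub
    simp only [norm_zero, add_zero] at hub
    have : h (t₀, (0:V)) ≤ K (t₀ • φ) := by
      simpa using hub
    have hM0 : M (t₀, (0:V)) = t₀^2/2 - h (t₀, (0:V)) := rfl
    rw [hM0]
    linarith [hKt₀]
  have hLψspos : 0 < L ψs := by
    rw [hLψs]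
    have hmm := hpmax' _ ht₀mem
    have h4 : (0:ℝ) < t₀^2/4 := by positivity
    exact lt_of_lt_of_le h4 (le_trans hMt₀ hmm)
  -- cone membership of ψs
  have hψs_cone : ∃ t : ℝ, 0 ≤ t ∧ ∃ χ : E, Pp χ = 0 ∧ ψs = t • φ + χ := by
    refine ⟨pstar.1, hpmem.1, (pstar.2 : E) + wm (cE pstar), ?_, hψs_decomp⟩
    rw [map_add, hPpV]
    have hwn : Pn (wm (cE pstar)) = wm (cE pstar) := hwmN (cE pstar)
    rw [← hwn, hPpPn]
    simp
  -- maximality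
  have hmax : ∀ ψ : E, (∃ t : ℝ, 0 ≤ t ∧ ∃ χ : E, Pp χ = 0 ∧ ψ = t • φ + χ) → L ψ ≤ L ψs := by
    rintro ψ ⟨t, ht, χ, hχ, rfl⟩
    set v : V := ⟨P0 χ, ⟨χ, rfl⟩⟩ with hvdef
    set w : E := Pn χ with hwdef
    have hwN : w ∈ N := hPnPn χ
    have hχsplit : χ = (v : E) + w := by
      have h := hsum χ
      rw [hχ] at h
      simpa [hvdef, hwdef] using h.symm
    have hψeq : t • φ + χ = t • φ + (v:E) + w := by rw [hχsplit, add_assoc]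
    have hcEv : cE (t, v) = t • φ + (v:E) := rfl
    have hLle : L (t • φ + χ) ≤ M (t, v) := by
      rw [hψeq, coneval t v w hwN]
      have hub := hhub (t, v) w hwN
      rw [hcEv] at hub
      have hMtv : M (t, v) = t^2/2 - h (t, v) := rfl
      rw [hMtv]
      linarith
    by_cases hp : (t, v) ∈ Kc
    · calc L (t • φ + χ) ≤ M (t, v) := hLle
        _ ≤ M pstar := hpmax' _ hp
        _ = L ψs := hLψs.symm
    · have hnorm : R₀ ≤ ‖t • φ + χ‖ := by
        have hplarge : R₀ < ‖((t, v) : ℝ × V)‖ := by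
          by_contra hcon
          push_neg at hcon
          exact hp ⟨ht, hcon⟩
        have hpn : ‖((t, v) : ℝ × V)‖ = max ‖t‖ ‖v‖ := Prod.norm_def _
        have hvn : ‖v‖ = ‖(v:E)‖ := rfl
        have hnsq := normeval t v w hwN
        have h1 : ‖((t, v) : ℝ × V)‖^2 ≤ ‖t • φ + (v:E) + w‖^2 := by
          rw [hpn, hnsq]
          rcases max_cases ‖t‖ ‖v‖ with ⟨hm, _⟩ | ⟨hm, _⟩ <;> rw [hm]
          · rw [Real.norm_eq_abs, sq_abs]
            nlinarith [sq_nonneg ‖(v:E)‖, sq_nonneg ‖w‖]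
          · rw [hvn]
            nlinarith [sq_nonneg t, sq_nonneg ‖w‖]
        have h2 : ‖((t, v) : ℝ × V)‖ ≤ ‖t • φ + (v:E) + w‖ := by
          nlinarith [norm_nonneg ((t, v) : ℝ × V), norm_nonneg (t • φ + (v:E) + w)]
        rw [hψeq]
        exact le_trans hplarge.le h2
      have := hRbound (t • φ + χ) ⟨t, χ, hχ, rfl⟩ hnorm
      linarith
  exact ⟨⟨ψs, hψs_cone, hLψspos, hmax⟩, ⟨R₀, fun ψ ⟨t, _, χ, hχ, hψ⟩ hn =>
    hRbound ψ ⟨t, χ, hχ, hψ⟩ hn⟩⟩
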